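/- arXiv:2102.06304 — 2 statements merged into one kernel-verified Lean document; each statement's English description precedes it below -/
import Mathlib

section
/- Suppose the random variable X satisfies E[X] = 0, |X| ≤ 1 almost surely and P(|X| > ε) ≤ ε for some ε ∈ (0,1). Then ‖X‖_{ψ₁} := sup_{p≥1} ‖X‖_p / p ≤ 2/(e·ln(1/ε)). -/
open MeasureTheory ProbabilityTheory

/-- The `L^p` norm of a real random variable, `(E|Z|^p)^(1/p)`. -/
noncomputable def lpNorm {Ω : Type*} [MeasurableSpace Ω] (μ : Measure Ω) (p : ℝ) (Z : Ω → ℝ) : ℝ :=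
  (∫ ω, |Z ω| ^ p ∂μ) ^ (1 / p)

/-- The Orlicz-type norm `‖Z‖_{ψ_α} = sup_{p ≥ 1} ‖Z‖_p / p^(1/α)`. -/
noncomputable def psiNorm {Ω : Type*} [MeasurableSpace Ω] (α : ℝ) (μ : Measure Ω) (Z : Ω → ℝ) : ℝ :=
  ⨆ p : {p : ℝ // 1 ≤ p}, lpNorm μ (p : ℝ) Z / (p : ℝ) ^ ((1 : ℝ) / α)

lemma aux_key (t : ℝ) : Real.exp 1 * (t * Real.exp (-t)) ≤ 1 := by
  have h := Real.add_one_le_exp (t - 1)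
  have h3 : Real.exp 1 * Real.exp (-1) = 1 := by rw [← Real.exp_add]; simp
  have h5 : Real.exp (t - 1) * Real.exp (-t) = Real.exp (-1) := by
    rw [← Real.exp_add]; ring_nf
  have h6 : t * Real.exp (-t) ≤ Real.exp (t - 1) * Real.exp (-t) :=
    mul_le_mul_of_nonneg_right (by linarith) (Real.exp_pos _).le
  calc Real.exp 1 * (t * Real.exp (-t))
      ≤ Real.exp 1 * (Real.exp (t - 1) * Real.exp (-t)) :=
        mul_le_mul_of_nonneg_left h6 (Real.exp_pos _).le
    _ = 1 := by rw [h5, h3]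

lemma aux_rpow_add (a b p : ℝ) (ha : 0 ≤ a) (hb : 0 ≤ b) (hp1 : 1 ≤ p) :
    (a ^ p + b ^ p) ^ (1 / p) ≤ a + b := by
  have h := NNReal.rpow_add_rpow_le_add (a.toNNReal) (b.toNNReal) hp1
  have := NNReal.coe_le_coe.2 h
  push_cast [NNReal.coe_rpow, Real.coe_toNNReal _ ha, Real.coe_toNNReal _ hb] at this
  exact this

lemma aux_eps_bound (ε : ℝ) (h0 : 0 < ε) (h1 : ε < 1) (p : ℝ) (hp : 1 ≤ p) :
    ε ^ (1 / p) / p ≤ 1 / (Real.exp 1 * Real.log (1 / ε)) := by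
  set L := Real.log (1 / ε) with hLdef
  have hL : 0 < L := Real.log_pos (by rw [lt_div_iff₀ h0]; linarith)
  have hp0 : 0 < p := lt_of_lt_of_le one_pos hp
  have hlog : Real.log ε = -L := by
    rw [hLdef, one_div, Real.log_inv]; ring
  have hrpow : ε ^ (1 / p) = Real.exp (-(L / p)) := by
    rw [Real.rpow_def_of_pos h0, hlog]; ring_nf
  have hkey := mul_le_mul_of_nonneg_right (aux_key (L / p)) hp0.le
  have heq : Real.exp 1 * (L / p * Real.exp (-(L / p))) * p
      = Real.exp (-(L / p)) * (Real.exp 1 * L) := by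
    field_simp
  rw [heq, one_mul] at hkey
  rw [div_le_div_iff₀ hp0 (by positivity), hrpow, one_mul]
  exact hkey

theorem stmt_5 {Ω : Type*} [MeasurableSpace Ω] (μ : Measure Ω) [IsProbabilityMeasure μ]
    (X : Ω → ℝ) (hmeas : Measurable X) (hint : Integrable X μ)
    (hcentered : ∫ ω, X ω ∂μ = 0)
    (hbdd : ∀ᵐ ω ∂μ, |X ω| ≤ 1)
    (ε : ℝ) (hε : ε ∈ Set.Ioo (0 : ℝ) 1)
    (htail : (μ {ω | ε < |X ω|}).toReal ≤ ε) :
    psiNorm 1 μ X ≤ 2 / (Real.exp 1 * Real.log (1 / ε)) := by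
  obtain ⟨hε0, hε1⟩ := hε
  set L := Real.log (1 / ε) with hLdef
  have hL : 0 < L := Real.log_pos (by rw [lt_div_iff₀ hε0]; linarith)
  have heL : 0 < Real.exp 1 * L := by positivity
  have hεle : ε ≤ 1 / (Real.exp 1 * L) := by
    have h := aux_eps_bound ε hε0 hε1 1 le_rfl
    rw [show (1:ℝ)/1 = 1 by norm_num, Real.rpow_one, div_one] at h
    exact h
  have hs : MeasurableSet {ω | ε < |X ω|} := measurableSet_lt measurable_const hmeas.abs
  -- per-p bound
  have hmain : ∀ p : ℝ, 1 ≤ p → lpNorm μ p X / p ≤ 2 / (Real.exp 1 * L) := by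
    intro p hp
    have hp0 : 0 < p := lt_of_lt_of_le one_pos hp
    have hpt : ∀ᵐ ω ∂μ, |X ω| ^ p ≤ ε ^ p + Set.indicator {ω | ε < |X ω|} (fun _ => (1:ℝ)) ω := by
      filter_upwards [hbdd] with ω hω
      by_cases h : ε < |X ω|
      · have h1 : |X ω| ^ p ≤ 1 := Real.rpow_le_one (abs_nonneg _) hω hp0.le
        have h2 : Set.indicator {ω | ε < |X ω|} (fun _ => (1:ℝ)) ω = 1 :=
          Set.indicator_of_mem (show ω ∈ {ω | ε < |X ω|} from h) _
        have : (0:ℝ) ≤ ε ^ p := Real.rpow_nonneg hε0.le _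
        linarith
      · push_neg at h
        have h1 : |X ω| ^ p ≤ ε ^ p := Real.rpow_le_rpow (abs_nonneg _) h hp0.le
        have h2 : (0:ℝ) ≤ Set.indicator {ω | ε < |X ω|} (fun _ => (1:ℝ)) ω :=
          Set.indicator_nonneg (fun _ _ => zero_le_one) _
        linarith
    have hmeasp : Measurable (fun ω => |X ω| ^ p) := by fun_prop
    have hintX : Integrable (fun ω => |X ω| ^ p) μ := by
      refine Integrable.mono' (integrable_const 1) hmeasp.aestronglyMeasurable ?_
      filter_upwards [hbdd] with ω hω
      rw [Real.norm_eq_abs, abs_of_nonneg (Real.rpow_nonneg (abs_nonneg _) _)]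
      exact Real.rpow_le_one (abs_nonneg _) hω hp0.le
    have hintI : Integrable (Set.indicator {ω | ε < |X ω|} (fun _ => (1:ℝ))) μ :=
      (integrable_const 1).indicator hs
    have hI : ∫ ω, |X ω| ^ p ∂μ ≤ ε ^ p + ε := by
      calc ∫ ω, |X ω| ^ p ∂μ
          ≤ ∫ ω, (ε ^ p + Set.indicator {ω | ε < |X ω|} (fun _ => (1:ℝ)) ω) ∂μ :=
            integral_mono_ae hintX ((integrable_const _).add hintI) hpt
        _ = ε ^ p + (μ {ω | ε < |X ω|}).toReal := by
            rw [integral_add (integrable_const _) hintI, integral_const,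
              integral_indicator_const _ hs]
            simp [Measure.real]
        _ ≤ ε ^ p + ε := by linarith
    have hInn : 0 ≤ ∫ ω, |X ω| ^ p ∂μ :=
      integral_nonneg fun ω => Real.rpow_nonneg (abs_nonneg _) _
    have hεp : (ε ^ (1 / p)) ^ p = ε := by
      rw [← Real.rpow_mul hε0.le, one_div, inv_mul_cancel₀ hp0.ne', Real.rpow_one]
    have hlp : lpNorm μ p X ≤ ε + ε ^ (1 / p) := by
      calc lpNorm μ p X = (∫ ω, |X ω| ^ p ∂μ) ^ (1 / p) := rfl
        _ ≤ (ε ^ p + ε) ^ (1 / p) := Real.rpow_le_rpow hInn hI (by positivity)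
        _ = (ε ^ p + (ε ^ (1 / p)) ^ p) ^ (1 / p) := by rw [hεp]
        _ ≤ ε + ε ^ (1 / p) := aux_rpow_add _ _ _ hε0.le (Real.rpow_nonneg hε0.le _) hp
    have h1 : ε / p ≤ 1 / (Real.exp 1 * L) := by
      calc ε / p ≤ ε / 1 := by
            apply div_le_div_of_nonneg_left hε0.le one_pos hp
        _ = ε := div_one ε
        _ ≤ 1 / (Real.exp 1 * L) := hεle
    have h2 : ε ^ (1 / p) / p ≤ 1 / (Real.exp 1 * L) := aux_eps_bound ε hε0 hε1 p hp
    calc lpNorm μ p X / p ≤ (ε + ε ^ (1 / p)) / p := by gcongr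
      _ = ε / p + ε ^ (1 / p) / p := add_div _ _ _
      _ ≤ 1 / (Real.exp 1 * L) + 1 / (Real.exp 1 * L) := add_le_add h1 h2
      _ = 2 / (Real.exp 1 * L) := by ring
  rw [psiNorm]
  have : Nonempty {p : ℝ // 1 ≤ p} := ⟨⟨1, le_rfl⟩⟩
  apply ciSup_le
  intro p
  have hp := p.2
  have h := hmain p hp
  simpa [Real.rpow_one] using h
end

section
/- Let C and b be positive reals and t > 0. Then inf_{β ∈ [0, 1/b)} ( −βt + Cβ²/(1 − bβ) ) ≤ −t² / (2(2C + bt)). -/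
theorem stmt_11 (C b t : ℝ) (hC : 0 < C) (hb : 0 < b) (ht : 0 < t) :
    sInf ((fun β : ℝ => -β * t + C * β ^ 2 / (1 - b * β)) '' Set.Ico 0 (1 / b)) ≤
      -t ^ 2 / (2 * (2 * C + b * t)) := by
  have hD : 0 < 2 * C + b * t := by positivity
  apply csInf_le
  · refine ⟨-t / b, ?_⟩
    rintro x ⟨β, ⟨hβ0, hβ1⟩, rfl⟩
    have h1 : 0 < 1 - b * β := by
      have := (lt_div_iff₀ hb).mp hβ1
      linarith [mul_comm b β]
    have h2 : 0 ≤ C * β ^ 2 / (1 - b * β) := by positivity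
    have h3 : β * t ≤ t / b := by
      rw [le_div_iff₀ hb]
      nlinarith [(lt_div_iff₀ hb).mp hβ1]
    simp only [neg_div]
    linarith
  · refine ⟨t / (2 * C + b * t), ⟨by positivity, ?_⟩, ?_⟩
    · rw [div_lt_div_iff₀ hD hb]
      nlinarith
    · have h1 : 1 - b * (t / (2 * C + b * t)) = 2 * C / (2 * C + b * t) := by
        field_simp
        ring
      simp only [h1]
      field_simp
      ring
end
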